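/- Let A be a 2×(m+1) matrix with entries in {±1,…,±n} and distinct columns. If some row of A contains both α and −α for some α ∈ {1,…,n}, then A is invalid: there exists nonzero b ∈ ℝ² such that the convex hull of the columns of the induced matrix M(A,b) contains the origin. -/

import Mathlib

/-- The vector in `ℝⁿ` corresponding to an entry `a = s·I` with `s ∈ {±1}`,
`I ∈ {1,…,n}`: the signed standard basis vector `s • e_I`. -/
def entryVec (n : ℕ) (a : ℤ) : EuclideanSpace ℝ (Fin n) :=
  WithLp.toLp 2 (fun i : Fin n => if ((i : ℕ) : ℤ) + 1 = a then (1 : ℝ) else if ((i : ℕ) : ℤ) + 1 = -a then -1 else 0)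

/-- The `j`-th column of the induced matrix `M(A,b)` of a `2 × (m+1)` matrix `A` with
entries in `{±1,…,±n}` and `b ∈ ℝ²`. -/
noncomputable def inducedCol (n m : ℕ) (A : Fin 2 → Fin (m + 1) → ℤ) (b : Fin 2 → ℝ) :
    Fin (m + 1) → EuclideanSpace ℝ (Fin n) :=
  fun j => b 0 • entryVec n (A 0 j) + b 1 • entryVec n (A 1 j)

/-- `A` is valid if for every nonzero `b ∈ ℝ²` the convex hull of the columns of the
induced matrix `M(A,b)` does not contain the origin. -/
def IsValid (n m : ℕ) (A : Fin 2 → Fin (m + 1) → ℤ) : Prop :=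
  ∀ b : Fin 2 → ℝ, b ≠ 0 →
    (0 : EuclideanSpace ℝ (Fin n)) ∉ convexHull ℝ (Set.range (inducedCol n m A b))

/-- A circuit in a `k × (m+1)` matrix: distinct rows `i₀, i₁` and distinct columns
`j₁,…,j_p` with `a_{i₁,j_α} = a_{i₀,j_{α+1}}` cyclically. -/
def HasCircuit {k m : ℕ} (A : Fin k → Fin (m + 1) → ℤ) : Prop :=
  ∃ i₀ i₁ : Fin k, i₀ ≠ i₁ ∧ ∃ p : ℕ, ∃ j : Fin (p + 1) → Fin (m + 1),
    Function.Injective j ∧ ∀ α, A i₁ (j α) = A i₀ (j (α + 1))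

/-- An anti-circuit: as a circuit, but with `a_{i₁,j_α} = −a_{i₀,j_{α+1}}` cyclically. -/
def HasAntiCircuit {k m : ℕ} (A : Fin k → Fin (m + 1) → ℤ) : Prop :=
  ∃ i₀ i₁ : Fin k, i₀ ≠ i₁ ∧ ∃ p : ℕ, ∃ j : Fin (p + 1) → Fin (m + 1),
    Function.Injective j ∧ ∀ α, A i₁ (j α) = -(A i₀ (j (α + 1)))

/-- if a row of a `2 × (m+1)` matrix with entries in `{±1,…,±n}` and
distinct columns contains both `α` and `−α` for some `α ∈ {1,…,n}`, then the matrix is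
invalid: for some nonzero `b ∈ ℝ²` the convex hull of the columns of `M(A,b)` contains
the origin. -/
theorem stmt11 (n m : ℕ) (A : Fin 2 → Fin (m + 1) → ℤ)
    (hA : ∀ i j, 1 ≤ |A i j| ∧ |A i j| ≤ (n : ℤ))
    (hcol : Function.Injective (fun j => fun i => A i j))
    (hrow : ∃ i : Fin 2, ∃ j₁ j₂ : Fin (m + 1), A i j₁ = -(A i j₂)) :
    ∃ b : Fin 2 → ℝ, b ≠ 0 ∧
      (0 : EuclideanSpace ℝ (Fin n)) ∈ convexHull ℝ (Set.range (inducedCol n m A b)) := by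
  obtain ⟨i, j₁, j₂, hij⟩ := hrow
  refine ⟨fun k => if k = i then 1 else 0, ?_, ?_⟩
  · intro h
    have := congrFun h i
    simp at this
  · have hcolj : ∀ j, inducedCol n m A (fun k => if k = i then 1 else 0) j
        = entryVec n (A i j) := by
      intro j
      fin_cases i <;> simp [inducedCol]
    have hneg : entryVec n (A i j₁) = - entryVec n (A i j₂) := by
      ext x
      simp only [entryVec, hij, neg_neg, PiLp.neg_apply, PiLp.toLp_apply]
      have hz : A i j₂ ≠ 0 := by
        intro h
        have := (hA i j₂).1
        simp [h] at this
      rcases eq_or_ne (((x : ℕ) : ℤ) + 1) (-A i j₂) with h1 | h1 <;>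
        rcases eq_or_ne (((x : ℕ) : ℤ) + 1) (A i j₂) with h2 | h2 <;>
        simp [h1, h2] <;> (try split_ifs) <;> (try norm_num) <;> (try intro h) <;> omega
    have h0 : (0 : EuclideanSpace ℝ (Fin n)) = midpoint ℝ
        (inducedCol n m A (fun k => if k = i then 1 else 0) j₁)
        (inducedCol n m A (fun k => if k = i then 1 else 0) j₂) := by
      rw [hcolj, hcolj, hneg, midpoint_comm, midpoint_self_neg]
    rw [h0]
    exact segment_subset_convexHull (Set.mem_range_self j₁) (Set.mem_range_self j₂)
      (midpoint_mem_segment _ _)
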